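/- Let B be a nondegenerate alternating bilinear form on a finite-dimensional complex vector space V and let P be nilpotent and self-adjoint with respect to B. Then: (a) if L and L′ are P-invariant Lagrangian subspaces with L ∩ L′ = 0 (hence V = L ⊕ L′), then 2·dim(L ∩ ker P^k) = dim ker P^k for every k ≥ 0; (b) conversely, if L is a P-invariant Lagrangian subspace satisfying 2·dim(L ∩ ker P^k) = dim ker P^k for every k ≥ 0, then there exists a P-invariant Lagrangian subspace L′ with L ∩ L′ = 0. (Thus a P-invariant Lagrangian subspace admits a complementary P-invariant Lagrangian subspace exactly when it is generic.) -/

import Mathlib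

open Module

/-- A `P`-invariant Lagrangian (i.e. bi-Lagrangian) subspace for the pair `(B, P)`. -/
def IsPInvLagrangian {V : Type*} [AddCommGroup V] [Module ℂ V]
    (B : V →ₗ[ℂ] V →ₗ[ℂ] ℂ) (P : V →ₗ[ℂ] V) (L : Submodule ℂ V) : Prop :=
  (∀ u ∈ L, ∀ v ∈ L, B u v = 0) ∧
  2 * finrank ℂ L = finrank ℂ V ∧
  ∀ u ∈ L, P u ∈ L

open LinearMap


namespace BiLagAux

variable {V : Type*} [AddCommGroup V] [Module ℂ V] [FiniteDimensional ℂ V]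
variable {B : V →ₗ[ℂ] V →ₗ[ℂ] ℂ} {P : V →ₗ[ℂ] V}

lemma bskew (hBalt : ∀ v, B v v = 0) (u v : V) : B u v = -B v u := by
  have h := hBalt (u + v)
  simp only [map_add, LinearMap.add_apply, hBalt u, hBalt v] at h
  linear_combination h

lemma brefl (hBalt : ∀ v, B v v = 0) : LinearMap.BilinForm.IsRefl B := by
  intro u v h
  rw [bskew hBalt, h, neg_zero]

lemma pow_sa (hPsa : ∀ u v, B (P u) v = B u (P v)) (k : ℕ) (u v : V) :
    B ((P ^ k) u) v = B u ((P ^ k) v) := by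
  induction k generalizing u v with
  | zero => simp
  | succ k IH =>
    calc B ((P ^ (k+1)) u) v = B ((P ^ k) (P u)) v := by rw [pow_succ]; rfl
    _ = B (P u) ((P ^ k) v) := IH _ _
    _ = B u (P ((P ^ k) v)) := hPsa _ _
    _ = B u ((P ^ (k+1)) v) := by rw [pow_succ']; rfl

lemma linv_pow {L : Submodule ℂ V} (hinv : ∀ u ∈ L, P u ∈ L) (k : ℕ) :
    ∀ u ∈ L, (P ^ k) u ∈ L := by
  induction k with
  | zero => simp
  | succ k IH =>
    intro u hu
    rw [pow_succ]
    exact IH _ (hinv u hu)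

lemma orth_range_eq_ker (hBalt : ∀ v, B v v = 0) (hBnd : ∀ v, (∀ u, B v u = 0) → v = 0)
    (hPsa : ∀ u v, B (P u) v = B u (P v)) (k : ℕ) :
    BilinForm.orthogonal B (LinearMap.range (P ^ k)) = LinearMap.ker (P ^ k) := by
  ext v
  rw [BilinForm.mem_orthogonal_iff, LinearMap.mem_ker]
  constructor
  · intro h
    refine hBnd _ fun u => ?_
    rw [pow_sa hPsa]
    have h1 : B ((P ^ k) u) v = 0 := h _ ⟨u, rfl⟩
    rw [bskew hBalt, h1, neg_zero]
  · rintro hv n ⟨u, rfl⟩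
    show B ((P ^ k) u) v = 0
    rw [pow_sa hPsa, hv, map_zero]

lemma orth_ker_eq_range (hBalt : ∀ v, B v v = 0) (hBnd : ∀ v, (∀ u, B v u = 0) → v = 0)
    (hPsa : ∀ u v, B (P u) v = B u (P v)) (k : ℕ) :
    BilinForm.orthogonal B (LinearMap.ker (P ^ k)) = LinearMap.range (P ^ k) := by
  conv_lhs => rw [← orth_range_eq_ker hBalt hBnd hPsa k]
  exact LinearMap.BilinForm.orthogonal_orthogonal ((LinearMap.IsRefl.nondegenerate_iff_separatingLeft (brefl hBalt)).2 hBnd) (brefl hBalt) _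

lemma orth_sup (X Y : Submodule ℂ V) :
    BilinForm.orthogonal B (X ⊔ Y) = BilinForm.orthogonal B X ⊓ BilinForm.orthogonal B Y := by
  ext v
  simp only [BilinForm.mem_orthogonal_iff, Submodule.mem_inf]
  constructor
  · intro h
    exact ⟨fun n hn => h n (Submodule.mem_sup_left hn),
           fun n hn => h n (Submodule.mem_sup_right hn)⟩
  · rintro ⟨h1, h2⟩ n hn
    obtain ⟨x, hx, y, hy, rfl⟩ := Submodule.mem_sup.1 hn
    show B (x + y) v = 0
    rw [map_add, LinearMap.add_apply, h1 x hx, h2 y hy, add_zero]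

lemma orth_lagr (hBalt : ∀ v, B v v = 0) (hBnd : ∀ v, (∀ u, B v u = 0) → v = 0)
    {L : Submodule ℂ V} (hiso : ∀ u ∈ L, ∀ w ∈ L, B u w = 0)
    (hdim : 2 * finrank ℂ L = finrank ℂ V) :
    BilinForm.orthogonal B L = L := by
  have hle : L ≤ BilinForm.orthogonal B L := fun v hv =>
    BilinForm.mem_orthogonal_iff.2 fun n hn => hiso n hn v hv
  refine (Submodule.eq_of_le_of_finrank_le hle ?_).symm
  rw [LinearMap.BilinForm.finrank_orthogonal ((LinearMap.IsRefl.nondegenerate_iff_separatingLeft (brefl hBalt)).2 hBnd)]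
  omega

lemma dim_inf_range (hBalt : ∀ v, B v v = 0) (hBnd : ∀ v, (∀ u, B v u = 0) → v = 0)
    (hPsa : ∀ u v, B (P u) v = B u (P v))
    {L : Submodule ℂ V} (hiso : ∀ u ∈ L, ∀ w ∈ L, B u w = 0)
    (hdim : 2 * finrank ℂ L = finrank ℂ V) (k : ℕ) :
    finrank ℂ ↥(L ⊓ LinearMap.range (P ^ k)) +
      finrank ℂ ↥(L ⊔ LinearMap.ker (P ^ k)) = finrank ℂ V := by
  have h : L ⊓ LinearMap.range (P ^ k) = BilinForm.orthogonal B (L ⊔ LinearMap.ker (P ^ k)) := by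
    rw [orth_sup, orth_lagr hBalt hBnd hiso hdim, orth_ker_eq_range hBalt hBnd hPsa]
  rw [h, LinearMap.BilinForm.finrank_orthogonal ((LinearMap.IsRefl.nondegenerate_iff_separatingLeft (brefl hBalt)).2 hBnd)]
  have := Submodule.finrank_le (L ⊔ LinearMap.ker (P ^ k))
  omega

lemma finrank_map_add_inf_ker (f : V →ₗ[ℂ] V) (S : Submodule ℂ V) :
    finrank ℂ ↥(S.map f) + finrank ℂ ↥(S ⊓ LinearMap.ker f) = finrank ℂ ↥S := by
  have h := LinearMap.finrank_range_add_finrank_ker (f.domRestrict S)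
  rw [LinearMap.range_domRestrict, LinearMap.ker_domRestrict] at h
  rw [← h]
  congr 1
  rw [← Submodule.finrank_map_subtype_eq S (Submodule.comap S.subtype (LinearMap.ker f)),
    Submodule.map_comap_subtype]


lemma part_a (hBalt : ∀ v, B v v = 0) (hBnd : ∀ v, (∀ u, B v u = 0) → v = 0)
    (hPsa : ∀ u v, B (P u) v = B u (P v))
    {L L' : Submodule ℂ V}
    (hiso : ∀ u ∈ L, ∀ w ∈ L, B u w = 0) (hdim : 2 * finrank ℂ L = finrank ℂ V)
    (hLinv : ∀ u ∈ L, P u ∈ L)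
    (hdim' : 2 * finrank ℂ L' = finrank ℂ V) (hL'inv : ∀ u ∈ L', P u ∈ L')
    (hdisj : L ⊓ L' = ⊥) (k : ℕ) :
    2 * finrank ℂ ↥(L ⊓ LinearMap.ker (P ^ k)) = finrank ℂ (LinearMap.ker (P ^ k)) := by
  have hsupLL' := Submodule.finrank_sup_add_finrank_inf_eq L L'
  rw [hdisj, finrank_bot] at hsupLL'
  have htop : L ⊔ L' = ⊤ := Submodule.eq_top_of_finrank_eq (by omega)
  -- L ⊓ range (P^k) = map (P^k) L
  have hLR : L ⊓ LinearMap.range (P ^ k) = Submodule.map (P ^ k) L := by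
    apply le_antisymm
    · rintro v ⟨hvL, u, rfl⟩
      have hu : u ∈ L ⊔ L' := htop ▸ Submodule.mem_top
      obtain ⟨l, hl, l', hl', rfl⟩ := Submodule.mem_sup.1 hu
      have h1 : (P ^ k) l ∈ L := linv_pow hLinv k l hl
      have h2 : (P ^ k) l' ∈ L' := linv_pow hL'inv k l' hl'
      have h3 : (P ^ k) l' ∈ L ⊓ L' := by
        refine ⟨?_, h2⟩
        have : (P ^ k) l' = (P ^ k) (l + l') - (P ^ k) l := by rw [map_add]; abel
        rw [this]
        exact sub_mem hvL h1
      rw [hdisj, Submodule.mem_bot] at h3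
      refine ⟨l, hl, ?_⟩
      rw [map_add, h3, add_zero]
    · rintro v ⟨l, hl, rfl⟩
      exact ⟨linv_pow hLinv k l hl, ⟨l, rfl⟩⟩
  have h1 := finrank_map_add_inf_ker (P ^ k) L
  have h2 := dim_inf_range hBalt hBnd hPsa hiso hdim k
  rw [hLR] at h2
  have h3 := Submodule.finrank_sup_add_finrank_inf_eq L (LinearMap.ker (P ^ k))
  omega

lemma purity (hBalt : ∀ v, B v v = 0) (hBnd : ∀ v, (∀ u, B v u = 0) → v = 0)
    (hPsa : ∀ u v, B (P u) v = B u (P v))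
    {L : Submodule ℂ V}
    (hiso : ∀ u ∈ L, ∀ w ∈ L, B u w = 0) (hdim : 2 * finrank ℂ L = finrank ℂ V)
    (hLinv : ∀ u ∈ L, P u ∈ L)
    (hgen : ∀ k : ℕ, 2 * finrank ℂ ↥(L ⊓ LinearMap.ker (P ^ k)) =
      finrank ℂ (LinearMap.ker (P ^ k)))
    (k : ℕ) (v : V) (hv : (P ^ k) v ∈ L) :
    ∃ w, (P ^ k) w = 0 ∧ v - w ∈ L := by
  have hle : L ⊔ LinearMap.ker (P ^ k) ≤ Submodule.comap (P ^ k) L := by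
    apply sup_le
    · intro u hu
      exact Submodule.mem_comap.2 (linv_pow hLinv k u hu)
    · intro u hu
      refine Submodule.mem_comap.2 ?_
      rw [LinearMap.mem_ker.1 hu]
      exact zero_mem L
  have heq : Submodule.comap (P ^ k) L = L ⊔ LinearMap.ker (P ^ k) := by
    refine (Submodule.eq_of_le_of_finrank_le hle ?_).symm
    have h1 := finrank_map_add_inf_ker (P ^ k) (Submodule.comap (P ^ k) L)
    have hmc : Submodule.map (P ^ k) (Submodule.comap (P ^ k) L) =
        L ⊓ LinearMap.range (P ^ k) := by
      rw [Submodule.map_comap_eq, inf_comm]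
    have hkc : Submodule.comap (P ^ k) L ⊓ LinearMap.ker (P ^ k) = LinearMap.ker (P ^ k) := by
      rw [inf_eq_right]
      intro u hu
      refine Submodule.mem_comap.2 ?_
      rw [LinearMap.mem_ker.1 hu]
      exact zero_mem L
    rw [hmc, hkc] at h1
    have h2 := dim_inf_range hBalt hBnd hPsa hiso hdim k
    have h3 := Submodule.finrank_sup_add_finrank_inf_eq L (LinearMap.ker (P ^ k))
    have h4 := hgen k
    omega
  have hvm : v ∈ L ⊔ LinearMap.ker (P ^ k) := heq ▸ Submodule.mem_comap.2 hv
  obtain ⟨l, hl, w, hw, rfl⟩ := Submodule.mem_sup.1 hvm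
  exact ⟨w, LinearMap.mem_ker.1 hw, by simpa using hl⟩


lemma split (P : V →ₗ[ℂ] V) (hPnil : IsNilpotent P) :
    ∀ n : ℕ, ∀ L : Submodule ℂ V, (∀ u ∈ L, P u ∈ L) →
      (∀ (k : ℕ) (v : V), (P ^ k) v ∈ L → ∃ w, (P ^ k) w = 0 ∧ v - w ∈ L) →
      finrank ℂ V ≤ finrank ℂ L + n →
      ∃ M : Submodule ℂ V, (∀ u ∈ M, P u ∈ M) ∧ IsCompl L M := by
  intro n
  induction n using Nat.strong_induction_on with
  | _ n IH =>
  intro L hinv hpure hn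
  classical
  obtain ⟨N, hN⟩ := hPnil
  have hex : ∃ d : ℕ, ∀ v : V, (P ^ d) v ∈ L := ⟨N, fun v => by rw [hN]; simp⟩
  set d := Nat.find hex with hdd
  have hQd : ∀ v, (P ^ d) v ∈ L := Nat.find_spec hex
  rcases Nat.eq_zero_or_pos d with hd0 | hdpos
  · have hLtop : L = ⊤ := eq_top_iff.2 fun v _ => by simpa [hd0] using hQd v
    exact ⟨⊥, by simp, hLtop ▸ isCompl_top_bot⟩
  -- d ≥ 1
  have hdlt : ¬ ∀ v : V, (P ^ (d - 1)) v ∈ L := Nat.find_min hex (by omega)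
  push_neg at hdlt
  obtain ⟨v₁, hv₁⟩ := hdlt
  obtain ⟨z, hz, hzv⟩ := hpure d v₁ (hQd v₁)
  have hznotin : (P ^ (d - 1)) z ∉ L := by
    intro h
    apply hv₁
    have h2 : (P ^ (d - 1)) (v₁ - z) ∈ L := linv_pow hinv _ _ hzv
    rw [map_sub] at h2
    have := add_mem h2 h
    simpa using this
  have hzpow : ∀ e : ℕ, d ≤ e → (P ^ e) z = 0 := by
    intro e he
    have : P ^ e = P ^ (e - d) * P ^ d := by rw [← pow_add]; congr 1; omega
    rw [this, Module.End.mul_apply, hz, map_zero]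
  -- key independence lemma
  have key : ∀ (e : ℕ) (c : Fin d → ℂ), (∑ j : Fin d, c j • (P ^ (e + (j : ℕ))) z) ∈ L →
      ∀ j : Fin d, e + (j : ℕ) < d → c j = 0 := by
    intro e
    suffices h : ∀ m : ℕ, ∀ c : Fin d → ℂ, (∑ j : Fin d, c j • (P ^ (e + (j : ℕ))) z) ∈ L →
        ∀ j : Fin d, (j : ℕ) < m → e + (j : ℕ) < d → c j = 0 by
      intro c hc j hj
      exact h d c hc j j.isLt hj
    intro m
    induction m with
    | zero => exact fun c _ j hj _ => absurd hj (Nat.not_lt_zero _)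
    | succ m IHm =>
      intro c hc j hj hjd
      rcases Nat.lt_or_ge (j : ℕ) m with h' | h'
      · exact IHm c hc j h' hjd
      · have hjm : (j : ℕ) = m := by omega
        have hemd : e + m < d := hjm ▸ hjd
        set t := d - 1 - (e + m) with ht
        have hsum : (∑ j' : Fin d, c j' • (P ^ (t + (e + (j' : ℕ)))) z) ∈ L := by
          have h0 : (P ^ t) (∑ j' : Fin d, c j' • (P ^ (e + (j' : ℕ))) z) =
              ∑ j' : Fin d, c j' • (P ^ (t + (e + (j' : ℕ)))) z := by
            rw [map_sum]
            refine Finset.sum_congr rfl fun j' _ => ?_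
            rw [map_smul, ← Module.End.mul_apply, ← pow_add]
          rw [← h0]
          exact linv_pow hinv t _ hc
        have hred : (∑ j' : Fin d, c j' • (P ^ (t + (e + (j' : ℕ)))) z) =
            c j • (P ^ (d - 1)) z := by
          rw [Finset.sum_eq_single j]
          · have harith : t + (e + (j : ℕ)) = d - 1 := by omega
            rw [harith]
          · intro j' _ hj'
            rcases Nat.lt_or_ge (j' : ℕ) m with h2 | h2
            · rw [IHm c hc j' h2 (by omega), zero_smul]
            · have : (j' : ℕ) > m := by
                rcases Nat.lt_or_ge m (j' : ℕ) with h3 | h3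
                · exact h3
                · exact absurd (Fin.ext (by omega : (j' : ℕ) = (j : ℕ))) hj'
              rw [hzpow (t + (e + (j' : ℕ))) (by omega), smul_zero]
          · intro h
            exact absurd (Finset.mem_univ j) h
        rw [hred] at hsum
        by_contra hc0
        exact hznotin (by
          have := Submodule.smul_mem L (c j)⁻¹ hsum
          rwa [smul_smul, inv_mul_cancel₀ hc0, one_smul] at this)
  -- the chain subspace C
  set g : Fin d → V := fun j => (P ^ (j : ℕ)) z with hg
  set C := Submodule.span ℂ (Set.range g) with hC
  have hCmem : ∀ x, x ∈ C ↔ ∃ c : Fin d → ℂ, ∑ j, c j • g j = x := fun x =>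
    Submodule.mem_span_range_iff_exists_fun ℂ
  have hg0 : ∀ c : Fin d → ℂ, (∑ j, c j • g j) ∈ L → ∀ j, c j = 0 := by
    intro c hc j
    refine key 0 c ?_ j (by simpa using j.isLt)
    simpa [hg] using hc
  have hLC : L ⊓ C = ⊥ := by
    rw [eq_bot_iff]
    rintro x ⟨hxL, hxC⟩
    obtain ⟨c, rfl⟩ := (hCmem x).1 hxC
    have hc0 := hg0 c hxL
    simp [hc0]
  have hli : LinearIndependent ℂ g :=
    Fintype.linearIndependent_iff.2 fun c h => hg0 c (h ▸ zero_mem L)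
  have hfinC : finrank ℂ C = d := by
    rw [hC, finrank_span_eq_card hli, Fintype.card_fin]
  have hCinv : ∀ u ∈ C, P u ∈ C := by
    intro u hu
    induction hu using Submodule.span_induction with
    | mem x hx =>
      obtain ⟨j, rfl⟩ := hx
      rcases Nat.lt_or_ge ((j : ℕ) + 1) d with h | h
      · apply Submodule.subset_span
        refine ⟨⟨(j : ℕ) + 1, h⟩, ?_⟩
        simp only [hg, ← Module.End.mul_apply, ← pow_succ']
      · have : P (g j) = 0 := by
          rw [hg]
          show P ((P ^ (j : ℕ)) z) = 0
          rw [← Module.End.mul_apply, ← pow_succ', hzpow _ h]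
        rw [this]; exact zero_mem C
    | zero => simp
    | add x y _ _ hx hy => rw [map_add]; exact add_mem hx hy
    | smul a x _ hx => rw [map_smul]; exact Submodule.smul_mem C a hx
  have hLCinv : ∀ u ∈ (L ⊔ C), P u ∈ (L ⊔ C) := by
    intro u hu
    obtain ⟨l, hl, x, hx, rfl⟩ := Submodule.mem_sup.1 hu
    rw [map_add]
    exact add_mem (Submodule.mem_sup_left (hinv l hl)) (Submodule.mem_sup_right (hCinv x hx))
  have hLCpure : ∀ (k : ℕ) (v : V), (P ^ k) v ∈ (L ⊔ C) → ∃ w, (P ^ k) w = 0 ∧ v - w ∈ (L ⊔ C) := by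
    intro k v hv
    rcases le_or_gt d k with hk | hk
    · have hmem : (P ^ k) v ∈ L := by
        have : P ^ k = P ^ (k - d) * P ^ d := by rw [← pow_add]; congr 1; omega
        rw [this, Module.End.mul_apply]
        exact linv_pow hinv _ _ (hQd v)
      obtain ⟨w, hw1, hw2⟩ := hpure k v hmem
      exact ⟨w, hw1, Submodule.mem_sup_left hw2⟩
    · obtain ⟨l, hl, x, hxC, heq⟩ := Submodule.mem_sup.1 hv
      obtain ⟨c, hcx⟩ := (hCmem x).1 hxC
      have hx1 : (P ^ (d - k)) x ∈ L := by
        have h1 : (P ^ (d - k)) ((P ^ k) v) = (P ^ d) v := by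
          rw [← Module.End.mul_apply, ← pow_add]
          congr 2
          omega
        have h2 : (P ^ (d - k)) x = (P ^ d) v - (P ^ (d - k)) l := by
          rw [← h1, ← heq, map_add]
          abel
        rw [h2]
        exact sub_mem (hQd v) (linv_pow hinv _ _ hl)
      have hx2 : (P ^ (d - k)) x = ∑ j : Fin d, c j • (P ^ ((d - k) + (j : ℕ))) z := by
        rw [← hcx, map_sum]
        refine Finset.sum_congr rfl fun j _ => ?_
        rw [map_smul]
        congr 1
        rw [hg, ← Module.End.mul_apply, ← pow_add]
      have hcz : ∀ j : Fin d, (j : ℕ) < k → c j = 0 := by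
        intro j hj
        exact key (d - k) c (hx2 ▸ hx1) j (by omega)
      set y := ∑ j : Fin d, c j • (P ^ ((j : ℕ) - k)) z with hy
      have hky : (P ^ k) y = x := by
        rw [hy, map_sum, ← hcx]
        refine Finset.sum_congr rfl fun j _ => ?_
        rw [map_smul]
        rcases le_or_gt k (j : ℕ) with h | h
        · congr 1
          rw [← Module.End.mul_apply, ← pow_add, hg]
          congr 2
          omega
        · rw [hcz j h, zero_smul, zero_smul]
      have hyC : y ∈ C := by
        rw [hy]
        refine Submodule.sum_mem C fun j _ => Submodule.smul_mem C _ ?_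
        apply Submodule.subset_span
        exact ⟨⟨(j : ℕ) - k, by omega⟩, rfl⟩
      have h3 : (P ^ k) (v - y) ∈ L := by
        rw [map_sub, hky]
        have : (P ^ k) v - x = l := by rw [← heq]; abel
        rw [this]
        exact hl
      obtain ⟨w, hw1, hw2⟩ := hpure k (v - y) h3
      refine ⟨w, hw1, ?_⟩
      have : v - w = (v - y - w) + y := by abel
      rw [this]
      exact add_mem (Submodule.mem_sup_left hw2) (Submodule.mem_sup_right hyC)
  have hr1 : finrank ℂ ↥(L ⊔ C) = finrank ℂ L + d := by
    have h := Submodule.finrank_sup_add_finrank_inf_eq L C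
    rw [hLC, finrank_bot] at h
    omega
  have hd_le : finrank ℂ ↥(L ⊔ C) ≤ finrank ℂ V := Submodule.finrank_le _
  have hdn : d ≤ n := by omega
  obtain ⟨M₁, hM₁inv, hM₁⟩ := IH (n - d) (by omega) (L ⊔ C) hLCinv hLCpure (by omega)
  refine ⟨C ⊔ M₁, ?_, ?_⟩
  · intro u hu
    obtain ⟨x, hx, m, hm, rfl⟩ := Submodule.mem_sup.1 hu
    rw [map_add]
    exact add_mem (Submodule.mem_sup_left (hCinv x hx)) (Submodule.mem_sup_right (hM₁inv m hm))
  · have htop : L ⊔ (C ⊔ M₁) = ⊤ := by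
      rw [← sup_assoc]
      exact codisjoint_iff.1 hM₁.codisjoint
    have hMfin := Submodule.finrank_add_eq_of_isCompl hM₁
    have hCM := Submodule.finrank_sup_add_finrank_inf_eq C M₁
    have h5 := Submodule.finrank_sup_add_finrank_inf_eq L (C ⊔ M₁)
    rw [htop, finrank_top] at h5
    have h6 : finrank ℂ ↥(L ⊓ (C ⊔ M₁)) = 0 := by omega
    exact ⟨disjoint_iff.2 (Submodule.finrank_eq_zero.1 h6), codisjoint_iff.2 htop⟩


lemma correct (hBalt : ∀ v, B v v = 0) (hBnd : ∀ v, (∀ u, B v u = 0) → v = 0)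
    (hPsa : ∀ u v, B (P u) v = B u (P v))
    {L M : Submodule ℂ V}
    (hiso : ∀ u ∈ L, ∀ w ∈ L, B u w = 0) (hdim : 2 * finrank ℂ L = finrank ℂ V)
    (hLinv : ∀ u ∈ L, P u ∈ L) (hMinv : ∀ u ∈ M, P u ∈ M) (hcompl : IsCompl L M) :
    ∃ L' : Submodule ℂ V,
      ((∀ u ∈ L', ∀ w ∈ L', B u w = 0) ∧ 2 * finrank ℂ L' = finrank ℂ V ∧
        ∀ u ∈ L', P u ∈ L') ∧ L ⊓ L' = ⊥ := by
  classical
  have hfM : finrank ℂ M = finrank ℂ L := by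
    have := Submodule.finrank_add_eq_of_isCompl hcompl
    omega
  -- the pairing L → Dual M
  set A : ↥L →ₗ[ℂ] (↥M →ₗ[ℂ] ℂ) :=
    { toFun := fun l => (B l.1).domRestrict M
      map_add' := fun x y => by ext m; simp
      map_smul' := fun c x => by ext m; simp } with hA
  have hAinj : Function.Injective A := by
    rw [← LinearMap.ker_eq_bot, eq_bot_iff]
    rintro ⟨l, hl⟩ hker
    have h0 : ∀ m ∈ M, B l m = 0 := by
      intro m hm
      have := LinearMap.congr_fun (LinearMap.mem_ker.1 hker) ⟨m, hm⟩
      simpa [hA] using this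
    have hall : ∀ u, B l u = 0 := by
      intro u
      have hu : u ∈ L ⊔ M := (codisjoint_iff.1 hcompl.codisjoint) ▸ Submodule.mem_top
      obtain ⟨a, ha, b, hb, rfl⟩ := Submodule.mem_sup.1 hu
      rw [map_add, hiso l hl a ha, h0 b hb, add_zero]
    have : l = 0 := hBnd l hall
    simp [this]
  have hAbij : Function.Bijective A := by
    refine ⟨hAinj, ?_⟩
    rw [← LinearMap.range_eq_top]
    apply Submodule.eq_top_of_finrank_eq
    rw [LinearMap.finrank_range_of_inj hAinj]
    have : finrank ℂ (↥M →ₗ[ℂ] ℂ) = finrank ℂ ↥M := Subspace.dual_finrank_eq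
    rw [this, hfM]
  set Ae := LinearEquiv.ofBijective A hAbij with hAe
  set gm : ↥M →ₗ[ℂ] (↥M →ₗ[ℂ] ℂ) :=
    { toFun := fun m => (-(1/2 : ℂ)) • (B m.1).domRestrict M
      map_add' := fun x y => by ext m; simp; ring
      map_smul' := fun c x => by ext m; simp; ring } with hgm
  set f : ↥M →ₗ[ℂ] ↥L := (Ae.symm : (↥M →ₗ[ℂ] ℂ) →ₗ[ℂ] ↥L) ∘ₗ gm with hf
  have hkey : ∀ (m m' : ↥M), B (f m).1 m'.1 = -(1/2 : ℂ) * B m.1 m'.1 := by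
    intro m m'
    have h1 : A (f m) = gm m := by
      rw [hf]
      simp only [LinearMap.coe_comp, Function.comp_apply, LinearEquiv.coe_coe]
      exact Ae.apply_symm_apply (gm m)
    have h2 := LinearMap.congr_fun h1 m'
    simpa [hA, hgm] using h2
  set G : ↥M →ₗ[ℂ] V := M.subtype + L.subtype ∘ₗ f with hG
  set L' := LinearMap.range G with hL'
  have hGapp : ∀ m : ↥M, G m = m.1 + (f m).1 := fun m => rfl
  have hGinj : Function.Injective G := by
    rw [← LinearMap.ker_eq_bot, eq_bot_iff]
    rintro m hm
    have h0 : m.1 + (f m).1 = 0 := LinearMap.mem_ker.1 hm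
    have h1 : m.1 ∈ L := by
      have : m.1 = -(f m).1 := eq_neg_of_add_eq_zero_left h0
      rw [this]
      exact neg_mem (f m).2
    have h2 : m.1 ∈ L ⊓ M := ⟨h1, m.2⟩
    rw [hcompl.inf_eq_bot] at h2
    have : m = 0 := Subtype.ext (Submodule.mem_bot ℂ |>.1 h2)
    simp [this]
  refine ⟨L', ⟨?_, ?_, ?_⟩, ?_⟩
  · rintro u ⟨m, rfl⟩ w ⟨m', rfl⟩
    rw [hGapp, hGapp]
    have e1 : B (f m).1 (f m').1 = 0 := hiso _ (f m).2 _ (f m').2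
    have e2 : B (f m).1 m'.1 = -(1/2 : ℂ) * B m.1 m'.1 := hkey m m'
    have e3 : B (f m').1 m.1 = -(1/2 : ℂ) * B m'.1 m.1 := hkey m' m
    have e4 : B m.1 (f m').1 = -B (f m').1 m.1 := bskew hBalt _ _
    have e5 : B m'.1 m.1 = -B m.1 m'.1 := bskew hBalt _ _
    simp only [map_add, LinearMap.add_apply]
    linear_combination e1 + e2 - e3 + e4 + (1/2 : ℂ) * e5
  · have : finrank ℂ L' = finrank ℂ M := by
      rw [hL', LinearMap.finrank_range_of_inj hGinj]
    omega
  · rintro x ⟨m, rfl⟩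
    set m₂ : ↥M := ⟨P m.1, hMinv _ m.2⟩ with hm₂
    have hPf : P (f m).1 = (f m₂).1 := by
      have h1 : A ⟨P (f m).1, hLinv _ (f m).2⟩ = A (f m₂) := by
        ext m'
        show B (P (f m).1) m'.1 = B (f m₂).1 m'.1
        rw [hPsa]
        have h2 : (P m'.1) ∈ M := hMinv _ m'.2
        have h3 := hkey m ⟨P m'.1, h2⟩
        have h4 := hkey m₂ m'
        rw [h3, h4, hm₂]
        show -(1/2 : ℂ) * B m.1 (P m'.1) = -(1/2 : ℂ) * B (P m.1) m'.1
        rw [hPsa]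
      have := hAinj h1
      exact congrArg Subtype.val this
    refine ⟨m₂, ?_⟩
    rw [hGapp, hGapp]
    rw [map_add, hPf, hm₂]
  · rw [eq_bot_iff]
    rintro x ⟨hxL, m, rfl⟩
    have h1 : m.1 ∈ L := by
      have : m.1 = G m - (f m).1 := by rw [hGapp]; abel
      rw [this]
      exact sub_mem hxL (f m).2
    have h2 : m.1 ∈ L ⊓ M := ⟨h1, m.2⟩
    rw [hcompl.inf_eq_bot] at h2
    have h3 : m = 0 := Subtype.ext (Submodule.mem_bot ℂ |>.1 h2)
    rw [Submodule.mem_bot, h3, map_zero]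

end BiLagAux

/-- **Complementary bi-Lagrangian subspaces exist exactly for generic ones.**
Let `B` be a nondegenerate alternating bilinear form on a finite-dimensional complex
vector space `V` and `P` nilpotent, self-adjoint with respect to `B`.  Then:
(a) if `L`, `L′` are `P`-invariant Lagrangian subspaces with `L ⊓ L′ = ⊥`, then
`2 · dim (L ⊓ ker P^k) = dim ker P^k` for every `k`; (b) conversely, if a
`P`-invariant Lagrangian `L` satisfies `2 · dim (L ⊓ ker P^k) = dim ker P^k` for
every `k`, then there is a `P`-invariant Lagrangian `L′` with `L ⊓ L′ = ⊥`. -/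
theorem complementary_biLagrangian_iff_generic
    {V : Type*} [AddCommGroup V] [Module ℂ V] [FiniteDimensional ℂ V]
    (B : V →ₗ[ℂ] V →ₗ[ℂ] ℂ)
    (hBalt : ∀ v, B v v = 0)
    (hBnd : ∀ v, (∀ u, B v u = 0) → v = 0)
    (P : V →ₗ[ℂ] V)
    (hPsa : ∀ u v, B (P u) v = B u (P v))
    (hPnil : IsNilpotent P) :
    (∀ L L' : Submodule ℂ V,
      IsPInvLagrangian B P L → IsPInvLagrangian B P L' → L ⊓ L' = ⊥ →
      ∀ k : ℕ, 2 * finrank ℂ ↥(L ⊓ LinearMap.ker (P ^ k)) =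
        finrank ℂ (LinearMap.ker (P ^ k))) ∧
    (∀ L : Submodule ℂ V, IsPInvLagrangian B P L →
      (∀ k : ℕ, 2 * finrank ℂ ↥(L ⊓ LinearMap.ker (P ^ k)) =
        finrank ℂ (LinearMap.ker (P ^ k))) →
      ∃ L' : Submodule ℂ V, IsPInvLagrangian B P L' ∧ L ⊓ L' = ⊥) := by
  constructor
  · intro L L' hL hL' hdisj k
    exact BiLagAux.part_a hBalt hBnd hPsa hL.1 hL.2.1 hL.2.2 hL'.2.1 hL'.2.2 hdisj k
  · intro L hL hgen
    obtain ⟨hiso, hdim, hinv⟩ := hL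
    have hpure := BiLagAux.purity hBalt hBnd hPsa hiso hdim hinv hgen
    obtain ⟨M, hMinv, hcompl⟩ := BiLagAux.split P hPnil (finrank ℂ V) L hinv hpure (by omega)
    obtain ⟨L', hL', hdisj⟩ := BiLagAux.correct hBalt hBnd hPsa hiso hdim hinv hMinv hcompl
    exact ⟨L', hL', hdisj⟩
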